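/- Let k ≥ 4 be an integer, f(u) := (k²/2) sin(2u), and for λ, μ > 0 let G_{λ,μ}(r) := f(Q_λ(r) - Q_μ(r)) - f(Q_λ(r)) + f(Q_μ(r)) - 4 (r/μ)^k ΛQ_λ(r)² - 4 (r/λ)^{-k} ΛQ_μ(r)². There is a constant C > 0 such that for all λ, μ > 0 with ν := λ/μ ≤ 1/2: |∫₀^∞ μ^{-1} ΛQ(r/μ) · r^{-2} G_{λ,μ}(r) · r dr| ≤ C ν^{2k+1}/λ and |∫₀^∞ λ^{-1} ΛQ(r/λ) · r^{-2} G_{λ,μ}(r) · r dr| ≤ C ν^{2k}/λ. -/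

import Mathlib

open MeasureTheory Set Filter

noncomputable section

/-- The `k`-equivariant harmonic map profile `Q(r) = 2 arctan(r^k)`. -/
def Qfun (k : ℕ) (r : ℝ) : ℝ := 2 * Real.arctan (r ^ k)

/-- `ΛQ(r) = 2k r^k / (1 + r^{2k})`. -/
def LamQ (k : ℕ) (r : ℝ) : ℝ := 2 * k * r ^ k / (1 + r ^ (2 * k))

/-- `f(u) = (k²/2) sin(2u)`. -/
def fNL (k : ℕ) (u : ℝ) : ℝ := (k : ℝ) ^ 2 / 2 * Real.sin (2 * u)

/-- `G_{λ,μ}(r) = f(Q_λ - Q_μ) - f(Q_λ) + f(Q_μ) - 4 (r/μ)^k (ΛQ_λ)² - 4 (r/λ)^{-k} (ΛQ_μ)²`. -/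
def Gfun (k : ℕ) (lam mu : ℝ) (r : ℝ) : ℝ :=
  fNL k (Qfun k (r / lam) - Qfun k (r / mu)) - fNL k (Qfun k (r / lam)) + fNL k (Qfun k (r / mu))
    - 4 * (r / mu) ^ k * LamQ k (r / lam) ^ 2
    - 4 * (r / lam) ^ (-(k : ℤ)) * LamQ k (r / mu) ^ 2

open Topology

lemma sin_two_arctan (z : ℝ) : Real.sin (2 * Real.arctan z) = 2*z/(1+z^2) := by
  have h : Real.sqrt (1+z^2) ^ 2 = 1 + z^2 := Real.sq_sqrt (by positivity)
  have hs : Real.sqrt (1+z^2) ≠ 0 := by positivity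
  rw [Real.sin_two_mul, Real.sin_arctan, Real.cos_arctan]
  field_simp
  rw [h]

lemma cos_two_arctan (z : ℝ) : Real.cos (2 * Real.arctan z) = (1-z^2)/(1+z^2) := by
  have h : Real.sqrt (1+z^2) ^ 2 = 1 + z^2 := Real.sq_sqrt (by positivity)
  have hs : Real.sqrt (1+z^2) ≠ 0 := by positivity
  rw [Real.cos_two_mul, Real.cos_arctan]
  field_simp
  nlinarith [h]

lemma sin_four_arctan (z : ℝ) : Real.sin (2*(2*Real.arctan z))
    = 2*(2*z/(1+z^2))*((1-z^2)/(1+z^2)) := by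
  rw [Real.sin_two_mul (2*Real.arctan z), sin_two_arctan, cos_two_arctan]

lemma cos_four_arctan (z : ℝ) : Real.cos (2*(2*Real.arctan z))
    = 2*((1-z^2)/(1+z^2))^2 - 1 := by
  rw [Real.cos_two_mul (2*Real.arctan z), cos_two_arctan]

/-- Closed rational form of `Gfun`. -/
lemma Gfun_eq (k : ℕ) {lam mu r : ℝ} (hlam : 0 < lam) (hmu : 0 < mu) (hr : 0 < r) :
    Gfun k lam mu r
      = -(16*(k:ℝ)^2*((r/mu)^k)^2*(1+3*((r/lam)^k)^2+3*((r/lam)^k)^3*((r/mu)^k)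
            +((r/lam)^k)^3*((r/mu)^k)^3)
          / (((r/lam)^k)*(1+((r/lam)^k)^2)^2*(1+((r/mu)^k)^2)^2)) := by
  set x : ℝ := (r/lam)^k with hxdef
  set y : ℝ := (r/mu)^k with hydef
  have hx : 0 < x := pow_pos (div_pos hr hlam) k
  have hy : 0 < y := pow_pos (div_pos hr hmu) k
  have hx2 : (0:ℝ) < 1 + x^2 := by positivity
  have hy2 : (0:ℝ) < 1 + y^2 := by positivity
  have hzx : (r/lam) ^ (-(k:ℤ)) = x⁻¹ := by
    rw [zpow_neg, zpow_natCast]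
  have h2x : (r/lam) ^ (2*k) = x^2 := by rw [two_mul, pow_add]; ring
  have h2y : (r/mu) ^ (2*k) = y^2 := by rw [two_mul, pow_add]; ring
  have hsin_sub : Real.sin (2 * (Qfun k (r/lam) - Qfun k (r/mu)))
      = (2*(2*x/(1+x^2))*((1-x^2)/(1+x^2))) * (2*((1-y^2)/(1+y^2))^2 - 1)
        - (2*((1-x^2)/(1+x^2))^2 - 1) * (2*(2*y/(1+y^2))*((1-y^2)/(1+y^2))) := by
    rw [Qfun, Qfun, mul_sub, Real.sin_sub, ← hxdef, ← hydef,
      sin_four_arctan, cos_four_arctan, sin_four_arctan, cos_four_arctan]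
  have hsinx : Real.sin (2 * Qfun k (r/lam))
      = 2*(2*x/(1+x^2))*((1-x^2)/(1+x^2)) := by
    rw [Qfun, ← hxdef, sin_four_arctan]
  have hsiny : Real.sin (2 * Qfun k (r/mu))
      = 2*(2*y/(1+y^2))*((1-y^2)/(1+y^2)) := by
    rw [Qfun, ← hydef, sin_four_arctan]
  rw [Gfun, fNL, fNL, fNL, LamQ, LamQ, hsin_sub, hsinx, hsiny, hzx, h2x, h2y, ← hxdef, ← hydef]
  field_simp
  ring

/-- Derivative of `r ↦ (r/μ)^k`. -/
lemma hasDerivAt_tmap (k : ℕ) (hk : 1 ≤ k) {mu r : ℝ} (hmu : 0 < mu) (hr : 0 < r) :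
    HasDerivAt (fun s : ℝ => (s/mu)^k) ((k:ℝ) * (r/mu)^k / r) r := by
  have h1 : HasDerivAt (fun s : ℝ => s/mu) (1/mu) r := (hasDerivAt_id r).div_const mu
  have h2 := h1.pow k
  refine h2.congr_deriv ?_
  obtain ⟨m, rfl⟩ : ∃ m, k = m + 1 := ⟨k-1, (Nat.succ_pred_eq_of_pos hk).symm⟩
  simp only [Nat.add_sub_cancel]
  have hmu' : mu ≠ 0 := ne_of_gt hmu
  have hr' : r ≠ 0 := ne_of_gt hr
  field_simp
  rw [pow_succ, mul_comm mu, mul_assoc, div_mul_cancel₀ r hmu', mul_comm]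

/-- Generic improper-integral computation over `(0,∞)` for derivatives composed
with `r ↦ (r/μ)^k`. -/
lemma master {k : ℕ} (hk : 1 ≤ k) {mu : ℝ} (hmu : 0 < mu)
    (Φ D : ℝ → ℝ) (L : ℝ)
    (hΦD : ∀ t : ℝ, HasDerivAt Φ (D t) t)
    (hD : ∀ t : ℝ, 0 < t → 0 ≤ D t)
    (hlim : Tendsto Φ atTop (𝓝 L)) :
    IntegrableOn (fun r => D ((r/mu)^k) * ((k:ℝ) * (r/mu)^k / r)) (Ioi (0:ℝ)) ∧
    ∫ r in Ioi (0:ℝ), D ((r/mu)^k) * ((k:ℝ) * (r/mu)^k / r) = L - Φ 0 := by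
  have hk0 : k ≠ 0 := by omega
  have hf : ∀ r ∈ Ioi (0:ℝ), HasDerivAt (fun r => Φ ((r/mu)^k))
      (D ((r/mu)^k) * ((k:ℝ)*(r/mu)^k/r)) r := by
    intro r hr
    exact (hΦD ((r/mu)^k)).comp r (hasDerivAt_tmap k hk hmu hr)
  have hΦc : Continuous Φ := continuous_iff_continuousAt.2 fun t => (hΦD t).continuousAt
  have hcont : ContinuousWithinAt (fun r => Φ ((r/mu)^k)) (Ici (0:ℝ)) 0 :=
    ((hΦc.comp (by continuity : Continuous fun r : ℝ => (r/mu)^k)).continuousWithinAt)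
  have hpos : ∀ r ∈ Ioi (0:ℝ), 0 ≤ D ((r/mu)^k) * ((k:ℝ)*(r/mu)^k/r) := by
    intro r hr
    have hr' : (0:ℝ) < r := hr
    have ht : 0 < (r/mu)^k := pow_pos (div_pos hr' hmu) k
    exact mul_nonneg (hD _ ht) (by positivity)
  have htend : Tendsto (fun r => Φ ((r/mu)^k)) atTop (𝓝 L) := by
    apply hlim.comp
    exact (tendsto_pow_atTop hk0).comp (tendsto_id.atTop_div_const hmu)
  have h0 : ((0:ℝ)/mu)^k = 0 := by
    rw [zero_div, zero_pow hk0]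
  refine ⟨integrableOn_Ioi_deriv_of_nonneg hcont hf hpos htend, ?_⟩
  rw [integral_Ioi_of_hasDerivAt_of_nonneg hcont hf hpos htend, h0]

/-- Antiderivative for the first integral estimate. -/
def Phi1 (w : ℝ) : ℝ → ℝ := fun t =>
  (-(w^3)/2)*(w^2+t^2)⁻¹ + (3/2)*Real.arctan t
    + ((-(1:ℝ)/2)*(1+t^2)⁻¹ + (-(1:ℝ)/2)*((1+t^2)^2)⁻¹)

/-- Dominating density for the first integral estimate. -/
def D1fun (w : ℝ) : ℝ → ℝ := fun t =>
  w^3*t/(w^2+t^2)^2 + (3/2)*(1/(1+t^2)) + (3*t/(1+t^2)^3 + t^3/(1+t^2)^3)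

/-- Antiderivative for the second integral estimate. -/
def Phi2 (w : ℝ) : ℝ → ℝ := fun t =>
  (-(3*w)/2)*(w^2+t^2)⁻¹ + (w^3/2)*((w^2+t^2)^2)⁻¹
    + ((3/(2*w))*Real.arctan t + (-(1:ℝ)/2)*(1+t^2)⁻¹)

/-- Dominating density for the second integral estimate. -/
def D2fun (w : ℝ) : ℝ → ℝ := fun t =>
  w^3*t/(w^2+t^2)^3 + 3*w*t^3/(w^2+t^2)^3 + ((3/(2*w))*(1/(1+t^2)) + t/(1+t^2)^2)

lemma hasDerivAt_Phi1 (w : ℝ) (hw : 0 < w) (t : ℝ) :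
    HasDerivAt (Phi1 w) (D1fun w t) t := by
  have hA : w^2+t^2 ≠ 0 := by positivity
  have hB : (1:ℝ)+t^2 ≠ 0 := by positivity
  have h0 : HasDerivAt (fun t : ℝ => w^2+t^2) (2*t) t := by
    simpa using (hasDerivAt_pow 2 t).const_add (w^2)
  have h0' : HasDerivAt (fun t : ℝ => 1+t^2) (2*t) t := by
    simpa using (hasDerivAt_pow 2 t).const_add (1:ℝ)
  have H := (((h0.inv hA).const_mul (-(w^3)/2)).add
      ((Real.hasDerivAt_arctan t).const_mul (3/2))).add
    (((h0'.inv hB).const_mul (-(1:ℝ)/2)).add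
      (((h0'.pow 2).inv (pow_ne_zero 2 hB)).const_mul (-(1:ℝ)/2)))
  refine H.congr_deriv ?_
  unfold D1fun
  simp only [Pi.pow_apply]
  field_simp
  ring

lemma hasDerivAt_Phi2 (w : ℝ) (hw : 0 < w) (t : ℝ) :
    HasDerivAt (Phi2 w) (D2fun w t) t := by
  have hA : w^2+t^2 ≠ 0 := by positivity
  have hB : (1:ℝ)+t^2 ≠ 0 := by positivity
  have h0 : HasDerivAt (fun t : ℝ => w^2+t^2) (2*t) t := by
    simpa using (hasDerivAt_pow 2 t).const_add (w^2)
  have h0' : HasDerivAt (fun t : ℝ => 1+t^2) (2*t) t := by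
    simpa using (hasDerivAt_pow 2 t).const_add (1:ℝ)
  have H := (((h0.inv hA).const_mul (-(3*w)/2)).add
      (((h0.pow 2).inv (pow_ne_zero 2 hA)).const_mul (w^3/2))).add
    (((Real.hasDerivAt_arctan t).const_mul (3/(2*w))).add
      ((h0'.inv hB).const_mul (-(1:ℝ)/2)))
  refine H.congr_deriv ?_
  unfold D2fun
  simp only [Pi.pow_apply]
  field_simp
  ring

lemma tendsto_Phi1 (w : ℝ) : Tendsto (Phi1 w) atTop (𝓝 ((3/2)*(Real.pi/2))) := by
  have l1 : Tendsto (fun t : ℝ => w^2+t^2) atTop atTop :=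
    tendsto_atTop_add_const_left _ _ (tendsto_pow_atTop two_ne_zero)
  have lB : Tendsto (fun t : ℝ => (1:ℝ)+t^2) atTop atTop :=
    tendsto_atTop_add_const_left _ _ (tendsto_pow_atTop two_ne_zero)
  have l1' : Tendsto (fun t : ℝ => (w^2+t^2)⁻¹) atTop (𝓝 0) :=
    tendsto_inv_atTop_zero.comp l1
  have lB' : Tendsto (fun t : ℝ => ((1:ℝ)+t^2)⁻¹) atTop (𝓝 0) :=
    tendsto_inv_atTop_zero.comp lB
  have lB2' : Tendsto (fun t : ℝ => (((1:ℝ)+t^2)^2)⁻¹) atTop (𝓝 0) :=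
    tendsto_inv_atTop_zero.comp ((tendsto_pow_atTop two_ne_zero).comp lB)
  have larc : Tendsto Real.arctan atTop (𝓝 (Real.pi/2)) :=
    Real.tendsto_arctan_atTop.mono_right nhdsWithin_le_nhds
  have H := (((l1'.const_mul (-(w^3)/2)).add (larc.const_mul (3/2))).add
    ((lB'.const_mul (-(1:ℝ)/2)).add (lB2'.const_mul (-(1:ℝ)/2))))
  rw [show (3/2)*(Real.pi/2) = (-(w^3)/2*0 + 3/2*(Real.pi/2))
    + ((-(1:ℝ)/2)*0 + (-(1:ℝ)/2)*0) by ring]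
  exact H

lemma tendsto_Phi2 (w : ℝ) : Tendsto (Phi2 w) atTop (𝓝 ((3/(2*w))*(Real.pi/2))) := by
  have l1 : Tendsto (fun t : ℝ => w^2+t^2) atTop atTop :=
    tendsto_atTop_add_const_left _ _ (tendsto_pow_atTop two_ne_zero)
  have lB : Tendsto (fun t : ℝ => (1:ℝ)+t^2) atTop atTop :=
    tendsto_atTop_add_const_left _ _ (tendsto_pow_atTop two_ne_zero)
  have l1' : Tendsto (fun t : ℝ => (w^2+t^2)⁻¹) atTop (𝓝 0) :=
    tendsto_inv_atTop_zero.comp l1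
  have l2' : Tendsto (fun t : ℝ => ((w^2+t^2)^2)⁻¹) atTop (𝓝 0) :=
    tendsto_inv_atTop_zero.comp ((tendsto_pow_atTop two_ne_zero).comp l1)
  have lB' : Tendsto (fun t : ℝ => ((1:ℝ)+t^2)⁻¹) atTop (𝓝 0) :=
    tendsto_inv_atTop_zero.comp lB
  have larc : Tendsto Real.arctan atTop (𝓝 (Real.pi/2)) :=
    Real.tendsto_arctan_atTop.mono_right nhdsWithin_le_nhds
  have H := (((l1'.const_mul (-(3*w)/2)).add (l2'.const_mul (w^3/2))).add
    ((larc.const_mul (3/(2*w))).add (lB'.const_mul (-(1:ℝ)/2))))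
  rw [show (3/(2*w))*(Real.pi/2) = (-(3*w)/2*0 + w^3/2*0)
    + (3/(2*w)*(Real.pi/2) + (-(1:ℝ)/2)*0) by ring]
  exact H

lemma Phi1_zero (w : ℝ) (hw : 0 < w) : Phi1 w 0 = -(w/2) - 1 := by
  have hw' : w ≠ 0 := ne_of_gt hw
  simp only [Phi1, Real.arctan_zero]
  field_simp
  ring

lemma Phi2_zero (w : ℝ) (hw : 0 < w) : Phi2 w 0 = -(1/w) - 1/2 := by
  have hw' : w ≠ 0 := ne_of_gt hw
  simp only [Phi2, Real.arctan_zero]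
  field_simp
  ring

lemma poly1 (w t : ℝ) (hw : 0 < w) (ht : 0 < t) :
    t*(w^3+3*w*t^2+3*t^4+t^6) ≤ w^3*t*(1+t^2)^3 + (3/2)*((w^2+t^2)^2*(1+t^2)^2)
      + 3*t*(w^2+t^2)^2 + t^3*(w^2+t^2)^2 := by
  have p1 : 0 ≤ w^3*t*(3*t^2+3*t^4+t^6) := by positivity
  have hA2 : 2*w*t^3 ≤ (w^2+t^2)^2 := by
    nlinarith [sq_nonneg (t*(t-w)), sq_nonneg (w^2), sq_nonneg (w*t)]
  have hB2 : (1:ℝ) ≤ (1+t^2)^2 := by nlinarith [sq_nonneg t, sq_nonneg (t^2)]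
  have p2 : 3*w*t^3 ≤ (3/2)*((w^2+t^2)^2*(1+t^2)^2) := by
    have h := le_mul_of_one_le_right (by positivity : (0:ℝ) ≤ (w^2+t^2)^2) hB2
    linarith
  have ht4 : t^4 ≤ (w^2+t^2)^2 := by nlinarith [sq_nonneg w, sq_nonneg (w*t)]
  have p3 : 3*t^5 ≤ 3*t*(w^2+t^2)^2 := by
    nlinarith [mul_le_mul_of_nonneg_left ht4 (le_of_lt (by positivity : (0:ℝ) < 3*t))]
  have p4 : t^7 ≤ t^3*(w^2+t^2)^2 := by
    nlinarith [mul_le_mul_of_nonneg_left ht4 (le_of_lt (by positivity : (0:ℝ) < t^3))]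
  nlinarith [p1, p2, p3, p4]

lemma poly2 (w t : ℝ) (hw : 0 < w) (ht : 0 < t) :
    t*(w^3+3*w*t^2+3*t^4+t^6) ≤ w^3*t*(1+t^2)^2 + 3*w*t^3*(1+t^2)^2
      + (3/(2*w))*((w^2+t^2)^3*(1+t^2)) + t*(w^2+t^2)^3 := by
  have hB2 : (1:ℝ) ≤ (1+t^2)^2 := by nlinarith [sq_nonneg t, sq_nonneg (t^2)]
  have q1 : w^3*t ≤ w^3*t*(1+t^2)^2 := le_mul_of_one_le_right (by positivity) hB2
  have q2 : 3*w*t^3 ≤ 3*w*t^3*(1+t^2)^2 := le_mul_of_one_le_right (by positivity) hB2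
  have hA : 2*w*t ≤ w^2+t^2 := by nlinarith [sq_nonneg (w-t)]
  have ht4 : t^4 ≤ (w^2+t^2)^2 := by nlinarith [sq_nonneg w, sq_nonneg (w*t)]
  have hA3 : 2*w*t^5 ≤ (w^2+t^2)^3 := by
    nlinarith [mul_le_mul hA ht4 (by positivity : (0:ℝ) ≤ t^4)
      (by positivity : (0:ℝ) ≤ w^2+t^2)]
  have q3 : 3*t^5 ≤ (3/(2*w))*((w^2+t^2)^3*(1+t^2)) := by
    have h1 : (3/(2*w))*(2*w*t^5) ≤ (3/(2*w))*(w^2+t^2)^3 :=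
      mul_le_mul_of_nonneg_left hA3 (by positivity)
    have h2 : (3/(2*w))*(2*w*t^5) = 3*t^5 := by field_simp
    have h3 : (3/(2*w))*(w^2+t^2)^3 ≤ (3/(2*w))*((w^2+t^2)^3*(1+t^2)) :=
      mul_le_mul_of_nonneg_left
        (le_mul_of_one_le_right (by positivity) (by nlinarith [sq_nonneg t]))
        (by positivity)
    linarith
  have ht6 : t^6 ≤ (w^2+t^2)^3 := by
    have h := pow_le_pow_left₀ (by positivity : (0:ℝ) ≤ t^2)
      (by nlinarith [sq_nonneg w] : t^2 ≤ w^2+t^2) 3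
    nlinarith [h]
  have q4 : t^7 ≤ t*(w^2+t^2)^3 := by
    nlinarith [mul_le_mul_of_nonneg_left ht6 ht.le]
  nlinarith [q1, q2, q3, q4]

lemma D1_ge (w t : ℝ) (hw : 0 < w) (ht : 0 < t) :
    t*(w^3+3*w*t^2+3*t^4+t^6)/((w^2+t^2)^2*(1+t^2)^3) ≤ D1fun w t := by
  have hD : D1fun w t = (w^3*t*(1+t^2)^3 + (3/2)*((w^2+t^2)^2*(1+t^2)^2)
      + 3*t*(w^2+t^2)^2 + t^3*(w^2+t^2)^2)/((w^2+t^2)^2*(1+t^2)^3) := by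
    unfold D1fun
    field_simp
    ring
  rw [hD]
  gcongr
  exact poly1 w t hw ht

lemma D2_ge (w t : ℝ) (hw : 0 < w) (ht : 0 < t) :
    t*(w^3+3*w*t^2+3*t^4+t^6)/((w^2+t^2)^3*(1+t^2)^2) ≤ D2fun w t := by
  have hw' : w ≠ 0 := ne_of_gt hw
  have hD : D2fun w t = (w^3*t*(1+t^2)^2 + 3*w*t^3*(1+t^2)^2
      + (3/(2*w))*((w^2+t^2)^3*(1+t^2)) + t*(w^2+t^2)^3)/((w^2+t^2)^3*(1+t^2)^2) := by
    unfold D2fun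
    field_simp
    ring
  rw [hD]
  gcongr
  exact poly2 w t hw ht


lemma Int1_alg (c x w r mu : ℝ) (hx : 0 < x) (hw : 0 < w) (hr : 0 < r) (hmu : 0 < mu) :
    mu⁻¹ * (2*c*(x*w)/(1+(x*w)^2))
      * ((-(16*c^2*(x*w)^2*(1+3*x^2+3*x^3*(x*w)+x^3*(x*w)^3)
          / (x*(1+x^2)^2*(1+(x*w)^2)^2))) / r^2) * r
    = -((32*c^3*w^2/mu)
        * ((x*w)^2*(w^3+3*w*(x*w)^2+3*(x*w)^4+(x*w)^6)
          / ((w^2+(x*w)^2)^2*(1+(x*w)^2)^3*r))) := by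
  have h1 : (1:ℝ)+x^2 ≠ 0 := by positivity
  have h2 : (1:ℝ)+(x*w)^2 ≠ 0 := by positivity
  have h3 : w^2+(x*w)^2 ≠ 0 := by positivity
  have hr' : r ≠ 0 := ne_of_gt hr
  have hmu' : mu ≠ 0 := ne_of_gt hmu
  have hx' : x ≠ 0 := ne_of_gt hx
  have hw' : w ≠ 0 := ne_of_gt hw
  field_simp
  ring

lemma Int2_alg (c x w r lam : ℝ) (hx : 0 < x) (hw : 0 < w) (hr : 0 < r) (hlam : 0 < lam) :
    lam⁻¹ * (2*c*x/(1+x^2))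
      * ((-(16*c^2*(x*w)^2*(1+3*x^2+3*x^3*(x*w)+x^3*(x*w)^3)
          / (x*(1+x^2)^2*(1+(x*w)^2)^2))) / r^2) * r
    = -((32*c^3*w^3/lam)
        * ((x*w)^2*(w^3+3*w*(x*w)^2+3*(x*w)^4+(x*w)^6)
          / ((w^2+(x*w)^2)^3*(1+(x*w)^2)^2*r))) := by
  have h1 : (1:ℝ)+x^2 ≠ 0 := by positivity
  have h2 : (1:ℝ)+(x*w)^2 ≠ 0 := by positivity
  have h3 : w^2+(x*w)^2 ≠ 0 := by positivity
  have hr' : r ≠ 0 := ne_of_gt hr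
  have hlam' : lam ≠ 0 := ne_of_gt hlam
  have hx' : x ≠ 0 := ne_of_gt hx
  have hw' : w ≠ 0 := ne_of_gt hw
  field_simp
  ring

lemma Int1_eq (k : ℕ) {lam mu r : ℝ} (hlam : 0 < lam) (hmu : 0 < mu) (hr : 0 < r) :
    mu⁻¹ * LamQ k (r/mu) * (Gfun k lam mu r / r^2) * r
      = -((32*(k:ℝ)^3*((lam/mu)^k)^2/mu)
          * (((r/lam)^k*(lam/mu)^k)^2*(((lam/mu)^k)^3
                +3*((lam/mu)^k)*((r/lam)^k*(lam/mu)^k)^2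
                +3*((r/lam)^k*(lam/mu)^k)^4+((r/lam)^k*(lam/mu)^k)^6)
            / ((((lam/mu)^k)^2+((r/lam)^k*(lam/mu)^k)^2)^2
                *(1+((r/lam)^k*(lam/mu)^k)^2)^3*r))) := by
  have hxy : (r/mu)^k = (r/lam)^k * (lam/mu)^k := by
    rw [← mul_pow]
    congr 1
    field_simp
  have hx : 0 < (r/lam)^k := pow_pos (div_pos hr hlam) k
  have hw : 0 < (lam/mu)^k := pow_pos (div_pos hlam hmu) k
  rw [LamQ, Gfun_eq k hlam hmu hr,
    show (r/mu)^(2*k) = ((r/mu)^k)^2 by rw [two_mul, pow_add]; ring, hxy]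
  have H := Int1_alg (k:ℝ) ((r/lam)^k) ((lam/mu)^k) r mu hx hw hr hmu
  calc mu⁻¹ * (2*(k:ℝ)*((r/lam)^k*(lam/mu)^k)/(1+((r/lam)^k*(lam/mu)^k)^2))
        * ((-(16*(k:ℝ)^2*((r/lam)^k*(lam/mu)^k)^2
              *(1+3*((r/lam)^k)^2+3*((r/lam)^k)^3*((r/lam)^k*(lam/mu)^k)
                +((r/lam)^k)^3*((r/lam)^k*(lam/mu)^k)^3)
          / (((r/lam)^k)*(1+((r/lam)^k)^2)^2*(1+((r/lam)^k*(lam/mu)^k)^2)^2))) / r^2) * r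
      = -((32*(k:ℝ)^3*((lam/mu)^k)^2/mu)
        * (((r/lam)^k*(lam/mu)^k)^2*(((lam/mu)^k)^3
              +3*((lam/mu)^k)*((r/lam)^k*(lam/mu)^k)^2
              +3*((r/lam)^k*(lam/mu)^k)^4+((r/lam)^k*(lam/mu)^k)^6)
          / ((((lam/mu)^k)^2+((r/lam)^k*(lam/mu)^k)^2)^2
              *(1+((r/lam)^k*(lam/mu)^k)^2)^3*r))) := H

lemma Int2_eq (k : ℕ) {lam mu r : ℝ} (hlam : 0 < lam) (hmu : 0 < mu) (hr : 0 < r) :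
    lam⁻¹ * LamQ k (r/lam) * (Gfun k lam mu r / r^2) * r
      = -((32*(k:ℝ)^3*((lam/mu)^k)^3/lam)
          * (((r/lam)^k*(lam/mu)^k)^2*(((lam/mu)^k)^3
                +3*((lam/mu)^k)*((r/lam)^k*(lam/mu)^k)^2
                +3*((r/lam)^k*(lam/mu)^k)^4+((r/lam)^k*(lam/mu)^k)^6)
            / ((((lam/mu)^k)^2+((r/lam)^k*(lam/mu)^k)^2)^3
                *(1+((r/lam)^k*(lam/mu)^k)^2)^2*r))) := by
  have hxy : (r/mu)^k = (r/lam)^k * (lam/mu)^k := by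
    rw [← mul_pow]
    congr 1
    field_simp
  have hx : 0 < (r/lam)^k := pow_pos (div_pos hr hlam) k
  have hw : 0 < (lam/mu)^k := pow_pos (div_pos hlam hmu) k
  rw [LamQ, Gfun_eq k hlam hmu hr,
    show (r/lam)^(2*k) = ((r/lam)^k)^2 by rw [two_mul, pow_add]; ring, hxy]
  exact Int2_alg (k:ℝ) ((r/lam)^k) ((lam/mu)^k) r lam hx hw hr hlam

lemma bound1 (c W t r mu : ℝ) (hc : 0 < c) (hw : 0 < W) (ht : 0 < t) (hr : 0 < r)
    (hmu : 0 < mu) :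
    (32*c^3*W^2/mu) * (t^2*(W^3+3*W*t^2+3*t^4+t^6)/((W^2+t^2)^2*(1+t^2)^3*r))
      ≤ (32*c^2*W^2/mu) * (D1fun W t * (c*t/r)) := by
  have key := D1_ge W t hw ht
  have h1 : (32*c^3*W^2/mu) * (t^2*(W^3+3*W*t^2+3*t^4+t^6)/((W^2+t^2)^2*(1+t^2)^3*r))
      = (32*c^3*W^2/mu) * ((t*(W^3+3*W*t^2+3*t^4+t^6)/((W^2+t^2)^2*(1+t^2)^3)) * (t/r)) := by
    have hA : (W^2+t^2)^2*(1+t^2)^3 ≠ 0 := by positivity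
    have hr' : r ≠ 0 := ne_of_gt hr
    field_simp
  have h2 : (32*c^2*W^2/mu) * (D1fun W t * (c*t/r))
      = (32*c^3*W^2/mu) * (D1fun W t * (t/r)) := by ring
  rw [h1, h2]
  apply mul_le_mul_of_nonneg_left _ (by positivity)
  exact mul_le_mul_of_nonneg_right key (by positivity)

lemma bound2 (c W t r lam : ℝ) (hc : 0 < c) (hw : 0 < W) (ht : 0 < t) (hr : 0 < r)
    (hlam : 0 < lam) :
    (32*c^3*W^3/lam) * (t^2*(W^3+3*W*t^2+3*t^4+t^6)/((W^2+t^2)^3*(1+t^2)^2*r))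
      ≤ (32*c^2*W^3/lam) * (D2fun W t * (c*t/r)) := by
  have key := D2_ge W t hw ht
  have h1 : (32*c^3*W^3/lam) * (t^2*(W^3+3*W*t^2+3*t^4+t^6)/((W^2+t^2)^3*(1+t^2)^2*r))
      = (32*c^3*W^3/lam) * ((t*(W^3+3*W*t^2+3*t^4+t^6)/((W^2+t^2)^3*(1+t^2)^2)) * (t/r)) := by
    have hA : (W^2+t^2)^3*(1+t^2)^2 ≠ 0 := by positivity
    have hr' : r ≠ 0 := ne_of_gt hr
    field_simp
  have h2 : (32*c^2*W^3/lam) * (D2fun W t * (c*t/r))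
      = (32*c^3*W^3/lam) * (D2fun W t * (t/r)) := by ring
  rw [h1, h2]
  apply mul_le_mul_of_nonneg_left _ (by positivity)
  exact mul_le_mul_of_nonneg_right key (by positivity)


set_option maxHeartbeats 2000000 in
/-- `|⟨ΛQ_μ̲ | r⁻² G_{λ,μ}⟩| ≤ C ν^{2k+1}/λ` and
`|⟨ΛQ_λ̲ | r⁻² G_{λ,μ}⟩| ≤ C ν^{2k}/λ`. -/
theorem stmt6 (k : ℕ) (hk : 4 ≤ k) :
    ∃ C : ℝ, 0 < C ∧
      ∀ lam mu : ℝ, 0 < lam → 0 < mu → lam / mu ≤ 1 / 2 →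
        |∫ r in Ioi (0 : ℝ), mu⁻¹ * LamQ k (r / mu) * (Gfun k lam mu r / r ^ 2) * r|
            ≤ C * (lam / mu) ^ (2 * k + 1) / lam ∧
        |∫ r in Ioi (0 : ℝ), lam⁻¹ * LamQ k (r / lam) * (Gfun k lam mu r / r ^ 2) * r|
            ≤ C * (lam / mu) ^ (2 * k) / lam := by
  have hk1 : 1 ≤ k := by omega
  have hkR : (0:ℝ) < (k:ℝ) := by exact_mod_cast (by omega : 0 < k)
  refine ⟨128*(k:ℝ)^2, by positivity, ?_⟩
  intro lam mu hlam hmu hnu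
  have hπ := Real.pi_lt_d2
  have hw : 0 < (lam/mu)^k := pow_pos (div_pos hlam hmu) k
  have hw1 : (lam/mu)^k ≤ 1 := pow_le_one₀ (div_pos hlam hmu).le (by linarith)
  set W := (lam/mu)^k with hWdef
  constructor
  · -- first inequality
    obtain ⟨hint, hval⟩ := master hk1 hmu (Phi1 W) (D1fun W) ((3/2)*(Real.pi/2))
        (hasDerivAt_Phi1 W hw) (fun t ht => by unfold D1fun; positivity) (tendsto_Phi1 W)
    set g : ℝ → ℝ := fun r => (32*(k:ℝ)^2*W^2/mu)
        * (D1fun W ((r/mu)^k) * ((k:ℝ)*(r/mu)^k/r)) with hgdef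
    have hgint : IntegrableOn g (Ioi (0:ℝ)) := hint.const_mul _
    have hgval : ∫ r in Ioi (0:ℝ), g r
        = (32*(k:ℝ)^2*W^2/mu) * ((3/2)*(Real.pi/2) - Phi1 W 0) := by
      simp only [hgdef]
      rw [MeasureTheory.integral_const_mul, hval]
    set E : ℝ → ℝ := fun r => (32*(k:ℝ)^3*W^2/mu)
        * (((r/lam)^k*W)^2*(W^3+3*W*((r/lam)^k*W)^2+3*((r/lam)^k*W)^4+((r/lam)^k*W)^6)
          / ((W^2+((r/lam)^k*W)^2)^2*(1+((r/lam)^k*W)^2)^3*r)) with hEdef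
    have hEeq : EqOn (fun r => mu⁻¹ * LamQ k (r/mu) * (Gfun k lam mu r / r^2) * r)
        (fun r => -E r) (Ioi (0:ℝ)) := by
      intro r hr
      exact Int1_eq k hlam hmu hr
    have hEnn : ∀ r ∈ Ioi (0:ℝ), 0 ≤ E r := by
      intro r hr
      have hr' : (0:ℝ) < r := hr
      have hx : 0 < (r/lam)^k := pow_pos (div_pos hr' hlam) k
      simp only [hEdef]
      positivity
    have hle : ∀ r ∈ Ioi (0:ℝ), E r ≤ g r := by
      intro r hr
      have hr' : (0:ℝ) < r := hr
      have hx : 0 < (r/lam)^k := pow_pos (div_pos hr' hlam) k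
      have ht : 0 < (r/mu)^k := pow_pos (div_pos hr' hmu) k
      have hxy : (r/mu)^k = (r/lam)^k*W := by
        rw [hWdef, ← mul_pow]
        congr 1
        field_simp
      simp only [hEdef, hgdef]
      rw [← hxy]
      exact bound1 (k:ℝ) W ((r/mu)^k) r mu hkR hw ht hr' hmu
    have hEcont : ContinuousOn E (Ioi (0:ℝ)) := by
      rw [hEdef]
      apply ContinuousOn.mul continuousOn_const
      apply ContinuousOn.div
      · fun_prop
      · fun_prop
      · intro r hr
        have hr' : (0:ℝ) < r := hr
        have hx : 0 < (r/lam)^k := pow_pos (div_pos hr' hlam) k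
        positivity
    have hEint : IntegrableOn E (Ioi (0:ℝ)) := by
      apply Integrable.mono' hgint (hEcont.aestronglyMeasurable measurableSet_Ioi)
      filter_upwards [ae_restrict_mem measurableSet_Ioi] with r hr
      rw [Real.norm_eq_abs, abs_of_nonneg (hEnn r hr)]
      exact hle r hr
    calc |∫ r in Ioi (0:ℝ), mu⁻¹ * LamQ k (r/mu) * (Gfun k lam mu r / r^2) * r|
        = |∫ r in Ioi (0:ℝ), -E r| := by
          rw [setIntegral_congr_fun measurableSet_Ioi hEeq]
      _ = |∫ r in Ioi (0:ℝ), E r| := by rw [integral_neg, abs_neg]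
      _ = ∫ r in Ioi (0:ℝ), E r :=
          abs_of_nonneg (setIntegral_nonneg measurableSet_Ioi hEnn)
      _ ≤ ∫ r in Ioi (0:ℝ), g r := setIntegral_mono_on hEint hgint measurableSet_Ioi hle
      _ = (32*(k:ℝ)^2*W^2/mu) * ((3/2)*(Real.pi/2) - Phi1 W 0) := hgval
      _ ≤ (32*(k:ℝ)^2*W^2/mu) * 4 := by
          apply mul_le_mul_of_nonneg_left _ (by positivity)
          rw [Phi1_zero W hw]
          nlinarith [hπ, hw1, hw]
      _ = 128*(k:ℝ)^2*(lam/mu)^(2*k+1)/lam := by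
          rw [hWdef, pow_succ, two_mul, pow_add]
          field_simp
          ring
  · -- second inequality
    obtain ⟨hint, hval⟩ := master hk1 hmu (Phi2 W) (D2fun W) ((3/(2*W))*(Real.pi/2))
        (hasDerivAt_Phi2 W hw) (fun t ht => by unfold D2fun; positivity) (tendsto_Phi2 W)
    set g : ℝ → ℝ := fun r => (32*(k:ℝ)^2*W^3/lam)
        * (D2fun W ((r/mu)^k) * ((k:ℝ)*(r/mu)^k/r)) with hgdef
    have hgint : IntegrableOn g (Ioi (0:ℝ)) := hint.const_mul _
    have hgval : ∫ r in Ioi (0:ℝ), g r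
        = (32*(k:ℝ)^2*W^3/lam) * ((3/(2*W))*(Real.pi/2) - Phi2 W 0) := by
      simp only [hgdef]
      rw [MeasureTheory.integral_const_mul, hval]
    set E : ℝ → ℝ := fun r => (32*(k:ℝ)^3*W^3/lam)
        * (((r/lam)^k*W)^2*(W^3+3*W*((r/lam)^k*W)^2+3*((r/lam)^k*W)^4+((r/lam)^k*W)^6)
          / ((W^2+((r/lam)^k*W)^2)^3*(1+((r/lam)^k*W)^2)^2*r)) with hEdef
    have hEeq : EqOn (fun r => lam⁻¹ * LamQ k (r/lam) * (Gfun k lam mu r / r^2) * r)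
        (fun r => -E r) (Ioi (0:ℝ)) := by
      intro r hr
      exact Int2_eq k hlam hmu hr
    have hEnn : ∀ r ∈ Ioi (0:ℝ), 0 ≤ E r := by
      intro r hr
      have hr' : (0:ℝ) < r := hr
      have hx : 0 < (r/lam)^k := pow_pos (div_pos hr' hlam) k
      simp only [hEdef]
      positivity
    have hle : ∀ r ∈ Ioi (0:ℝ), E r ≤ g r := by
      intro r hr
      have hr' : (0:ℝ) < r := hr
      have hx : 0 < (r/lam)^k := pow_pos (div_pos hr' hlam) k
      have ht : 0 < (r/mu)^k := pow_pos (div_pos hr' hmu) k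
      have hxy : (r/mu)^k = (r/lam)^k*W := by
        rw [hWdef, ← mul_pow]
        congr 1
        field_simp
      simp only [hEdef, hgdef]
      rw [← hxy]
      exact bound2 (k:ℝ) W ((r/mu)^k) r lam hkR hw ht hr' hlam
    have hEcont : ContinuousOn E (Ioi (0:ℝ)) := by
      rw [hEdef]
      apply ContinuousOn.mul continuousOn_const
      apply ContinuousOn.div
      · fun_prop
      · fun_prop
      · intro r hr
        have hr' : (0:ℝ) < r := hr
        have hx : 0 < (r/lam)^k := pow_pos (div_pos hr' hlam) k
        positivity
    have hEint : IntegrableOn E (Ioi (0:ℝ)) := by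
      apply Integrable.mono' hgint (hEcont.aestronglyMeasurable measurableSet_Ioi)
      filter_upwards [ae_restrict_mem measurableSet_Ioi] with r hr
      rw [Real.norm_eq_abs, abs_of_nonneg (hEnn r hr)]
      exact hle r hr
    calc |∫ r in Ioi (0:ℝ), lam⁻¹ * LamQ k (r/lam) * (Gfun k lam mu r / r^2) * r|
        = |∫ r in Ioi (0:ℝ), -E r| := by
          rw [setIntegral_congr_fun measurableSet_Ioi hEeq]
      _ = |∫ r in Ioi (0:ℝ), E r| := by rw [integral_neg, abs_neg]
      _ = ∫ r in Ioi (0:ℝ), E r :=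
          abs_of_nonneg (setIntegral_nonneg measurableSet_Ioi hEnn)
      _ ≤ ∫ r in Ioi (0:ℝ), g r := setIntegral_mono_on hEint hgint measurableSet_Ioi hle
      _ = (32*(k:ℝ)^2*W^3/lam) * ((3/(2*W))*(Real.pi/2) - Phi2 W 0) := hgval
      _ = (32*(k:ℝ)^2*W^2/lam) * ((3/2)*(Real.pi/2) + 1 + W/2) := by
          rw [Phi2_zero W hw]
          have hW' : W ≠ 0 := ne_of_gt hw
          field_simp
          ring
      _ ≤ (32*(k:ℝ)^2*W^2/lam) * 4 := by
          apply mul_le_mul_of_nonneg_left _ (by positivity)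
          nlinarith [hπ, hw1, hw]
      _ = 128*(k:ℝ)^2*(lam/mu)^(2*k)/lam := by
          rw [hWdef, two_mul, pow_add]
          field_simp
          ring

end
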